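/- Let S be a commutative ring and u, π, τ ∈ S such that for every m ≥ 1 the image of u in S/τᵐS is a non-zero-divisor. Suppose (c'_j)_{j≥0} and (d_j)_{j≥1} are elements of S satisfying d_j·τʲ = π·τ·c'_{j−1} − u·c'_j for every j ≥ 1. Then c'_j ∈ τʲS for every j ≥ 1. -/

import Mathlib

/-- **Divisibility propagation from a recurrence.**
Let `S` be a commutative ring and `u, π, τ ∈ S` such that for every `m ≥ 1` the image of
`u` in `S/τᵐS` is a non-zero-divisor.  Suppose `(c'_j)_{j≥0}` and `(d_j)_{j≥1}` satisfy
`d_j·τʲ = π·τ·c'_{j−1} − u·c'_j` for every `j ≥ 1`.  Then `c'_j ∈ τʲS` for every `j ≥ 1`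
(stated below with the index shift `j = k + 1`). -/
theorem mem_span_pow_of_rec'
    {S : Type*} [CommRing S] (u π τ : S)
    (hu : ∀ m : ℕ, 1 ≤ m →
      Ideal.Quotient.mk (Ideal.span {τ ^ m}) u ∈ nonZeroDivisors (S ⧸ Ideal.span {τ ^ m}))
    (c' d : ℕ → S)
    (h : ∀ k : ℕ, d (k + 1) * τ ^ (k + 1) = π * τ * c' k - u * c' (k + 1)) :
    ∀ k : ℕ, c' (k + 1) ∈ Ideal.span {τ ^ (k + 1)} := by
  have main : ∀ k, c' k ∈ Ideal.span {τ ^ k} := by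
    intro k
    induction k with
    | zero => simp
    | succ k ih =>
      have hm : u * c' (k + 1) ∈ Ideal.span {τ ^ (k + 1)} := by
        obtain ⟨s, hs⟩ := Ideal.mem_span_singleton'.mp ih
        have h1 : π * τ * c' k ∈ Ideal.span {τ ^ (k + 1)} := by
          rw [Ideal.mem_span_singleton]
          exact ⟨π * s, by rw [← hs]; ring⟩
        have h2 : d (k + 1) * τ ^ (k + 1) ∈ Ideal.span {τ ^ (k + 1)} := by
          rw [Ideal.mem_span_singleton]
          exact ⟨d (k + 1), mul_comm _ _⟩
        have heq : u * c' (k + 1) = π * τ * c' k - d (k + 1) * τ ^ (k + 1) := by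
          linear_combination h k
        rw [heq]
        exact Ideal.sub_mem _ h1 h2
      have hq := hu (k + 1) (by omega)
      have h0 := Ideal.Quotient.eq_zero_iff_mem.mpr hm
      rw [map_mul] at h0
      exact Ideal.Quotient.eq_zero_iff_mem.mp (mem_nonZeroDivisors_iff_right.mp hq _ (by rw [mul_comm]; exact h0))
  intro k; exact main (k + 1)
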